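/- Let G_0, ..., G_{T-1} be random matrices in R^{m×n} and Q ∈ R^{m×m} a symmetric positive definite matrix such that E[G_t G_tᵀ] ⪯ Q² for every t. Then E[ ‖(Σ_{t=0}^{T-1} G_t G_tᵀ)^{1/2}‖_* ] ≤ √T · ‖Q‖_*, where ‖Q‖_* = tr(Q). -/

import Mathlib

open Matrix MeasureTheory
open scoped Classical

/-- The positive semidefinite square root of a positive semidefinite real matrix
(junk value `0` if the matrix is not positive semidefinite). -/
noncomputable def psdSqrt {k : ℕ} (X : Matrix (Fin k) (Fin k) ℝ) : Matrix (Fin k) (Fin k) ℝ :=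
  if h : X.PosSemidef then
    h.1.eigenvectorUnitary.1 * diagonal ((↑) ∘ (√·) ∘ h.1.eigenvalues) *
      (star h.1.eigenvectorUnitary : Matrix (Fin k) (Fin k) ℝ)
  else 0

/-- The trace (nuclear) norm of a real matrix: the sum of its singular values,
i.e. `tr((Aᵀ A)^{1/2})`. -/
noncomputable def nuclearNorm {m n : ℕ} (A : Matrix (Fin m) (Fin n) ℝ) : ℝ :=
  (psdSqrt (Aᵀ * A)).trace

namespace Matrix.PosSemidef

open scoped MatrixOrder

/-- Square root of a positive semidefinite matrix (replacement for the removed Mathlib API). -/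
noncomputable def sqrt {k : ℕ} {A : Matrix (Fin k) (Fin k) ℝ} (_ : A.PosSemidef) :
    Matrix (Fin k) (Fin k) ℝ :=
  psdSqrt A

lemma sqrt_eq_cfcSqrt {k : ℕ} {A : Matrix (Fin k) (Fin k) ℝ} (hA : A.PosSemidef) :
    hA.sqrt = CFC.sqrt A := by
  rw [CFC.sqrt_eq_real_sqrt A hA.nonneg, cfcₙ_eq_cfc, hA.1.cfc_eq, sqrt, psdSqrt, dif_pos hA]
  simp [IsHermitian.cfc, Unitary.conjStarAlgAut_apply]
  rfl

lemma posSemidef_sqrt {k : ℕ} {A : Matrix (Fin k) (Fin k) ℝ} (hA : A.PosSemidef) :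
    hA.sqrt.PosSemidef := by
  rw [sqrt_eq_cfcSqrt]; exact (CFC.sqrt_nonneg A).posSemidef

lemma sqrt_mul_self {k : ℕ} {A : Matrix (Fin k) (Fin k) ℝ} (hA : A.PosSemidef) :
    hA.sqrt * hA.sqrt = A := by
  rw [sqrt_eq_cfcSqrt]; exact CFC.sqrt_mul_sqrt_self A hA.nonneg

lemma eq_sqrt_of_sq_eq {k : ℕ} {A B : Matrix (Fin k) (Fin k) ℝ} (hB : B.PosSemidef)
    (hA : A.PosSemidef) (h : B ^ 2 = A) : B = hA.sqrt := by
  rw [sqrt_eq_cfcSqrt, eq_comm, CFC.sqrt_eq_iff A B hA.nonneg hB.nonneg, ← pow_two, h]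

end Matrix.PosSemidef

lemma trace_nonneg_of_psd {k : ℕ} {A : Matrix (Fin k) (Fin k) ℝ} (hA : A.PosSemidef) :
    0 ≤ A.trace := by
  rw [Matrix.trace]
  apply Finset.sum_nonneg
  intro i _
  simpa using hA.diag_nonneg (i := i)

lemma trace_mul_nonneg' {k : ℕ} {A B : Matrix (Fin k) (Fin k) ℝ} (hA : A.PosSemidef)
    (hB : B.PosSemidef) : 0 ≤ (A * B).trace := by
  have h1 : (A * B).trace = (hA.sqrt * B * hA.sqrt).trace := by
    rw [Matrix.trace_mul_cycle hA.sqrt B hA.sqrt, hA.sqrt_mul_self]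
  rw [h1]
  have := hB.mul_mul_conjTranspose_same hA.sqrt
  rw [hA.posSemidef_sqrt.isHermitian.eq] at this
  exact trace_nonneg_of_psd this

lemma trace_sqrt_le' {k : ℕ} {S M : Matrix (Fin k) (Fin k) ℝ} (hS : S.PosSemidef)
    (hM : M.PosDef) : hS.sqrt.trace ≤ ((M⁻¹ * S).trace + M.trace) / 2 := by
  set R := hS.sqrt with hR
  set P := hM.posSemidef.sqrt with hP
  have hPP : P * P = M := hM.posSemidef.sqrt_mul_self
  have hRR : R * R = S := hS.sqrt_mul_self
  have hdet : IsUnit P.det := by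
    have : P.det * P.det = M.det := by rw [← Matrix.det_mul, hPP]
    have hMdet := hM.det_pos
    refine isUnit_iff_ne_zero.2 fun h => ?_
    rw [h, mul_zero] at this
    exact hMdet.ne' this.symm
  have hPinv : P * P⁻¹ = 1 := Matrix.mul_nonsing_inv P hdet
  have hinvP : P⁻¹ * P = 1 := Matrix.nonsing_inv_mul P hdet
  have hPH : Pᴴ = P := hM.posSemidef.posSemidef_sqrt.isHermitian.eq
  have hRH : Rᴴ = R := hS.posSemidef_sqrt.isHermitian.eq
  have hPinvH : (P⁻¹)ᴴ = P⁻¹ := by rw [Matrix.conjTranspose_nonsing_inv, hPH]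
  have hMinv : P⁻¹ * P⁻¹ = M⁻¹ := by rw [← Matrix.mul_inv_rev, hPP]
  set C := P - P⁻¹ * R with hC
  have hCpsd := Matrix.posSemidef_conjTranspose_mul_self C
  have hkey : 0 ≤ (Cᴴ * C).trace := trace_nonneg_of_psd hCpsd
  have hCH : Cᴴ = P - R * P⁻¹ := by
    rw [hC, Matrix.conjTranspose_sub, Matrix.conjTranspose_mul, hPH, hRH, hPinvH]
  have hexp : (Cᴴ * C).trace = M.trace - 2 * R.trace + (M⁻¹ * S).trace := by
    have h1 : Cᴴ * C = M - P * (P⁻¹ * R) - (R * P⁻¹) * P + (R * P⁻¹) * (P⁻¹ * R) := by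
      rw [hCH, hC]
      noncomm_ring
      rw [hPP]
      abel
    have h2 : P * (P⁻¹ * R) = R := by rw [← mul_assoc, hPinv, one_mul]
    have h3 : (R * P⁻¹) * P = R := by rw [mul_assoc, hinvP, mul_one]
    have h4 : ((R * P⁻¹) * (P⁻¹ * R)).trace = (M⁻¹ * S).trace := by
      rw [show (R * P⁻¹) * (P⁻¹ * R) = R * M⁻¹ * R by
        rw [mul_assoc, ← mul_assoc (P⁻¹), hMinv, mul_assoc]]
      rw [Matrix.trace_mul_cycle R M⁻¹ R, hRR, Matrix.trace_mul_comm]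
    rw [h1]
    simp only [Matrix.trace_sub, Matrix.trace_add, h2, h3, h4]
    ring
  rw [hexp] at hkey
  linarith

lemma psdSqrt_eq' {k : ℕ} {A X : Matrix (Fin k) (Fin k) ℝ} (hA : A.PosSemidef)
    (h : A * A = X) : psdSqrt X = A := by
  have hX : X.PosSemidef := by rw [← h, ← pow_two]; exact hA.pow 2
  rw [show psdSqrt X = hX.sqrt from rfl]
  exact (hA.eq_sqrt_of_sq_eq hX (by rw [pow_two, h])).symm

lemma nuclearNorm_psdSqrt' {k : ℕ} {X : Matrix (Fin k) (Fin k) ℝ} (hX : X.PosSemidef) :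
    nuclearNorm (psdSqrt X) = hX.sqrt.trace := by
  have h1 : psdSqrt X = hX.sqrt := rfl
  have hT : hX.sqrtᵀ = hX.sqrt := by
    rw [← Matrix.conjTranspose_eq_transpose_of_trivial, hX.posSemidef_sqrt.isHermitian.eq]
  rw [nuclearNorm, h1, hT, hX.sqrt_mul_self, psdSqrt_eq' hX.posSemidef_sqrt hX.sqrt_mul_self]

lemma posSemidef_sum' {k : ℕ} {ι : Type*} (s : Finset ι) (f : ι → Matrix (Fin k) (Fin k) ℝ)
    (h : ∀ i ∈ s, (f i).PosSemidef) : (∑ i ∈ s, f i).PosSemidef := by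
  classical
  induction s using Finset.induction_on with
  | empty => simpa using Matrix.PosSemidef.zero
  | insert _ _ hnot ih =>
    rw [Finset.sum_insert hnot]
    exact (h _ (Finset.mem_insert_self _ _)).add
      (ih fun i hi => h i (Finset.mem_insert_of_mem hi))

lemma trace_mul_eq' {k : ℕ} (A B : Matrix (Fin k) (Fin k) ℝ) :
    (A * B).trace = ∑ a, ∑ b, A a b * B b a := by
  simp [Matrix.trace, Matrix.diag, Matrix.mul_apply]

/-- let `G_0, ..., G_{T-1}` be random matrices in `ℝ^{m×n}` and
`Q ∈ ℝ^{m×m}` symmetric positive definite with `E[G_t G_tᵀ] ⪯ Q²` for every `t`. Then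
`E[‖(∑_t G_t G_tᵀ)^{1/2}‖_*] ≤ √T · ‖Q‖_*`. -/
theorem stmt17 (m n T : ℕ)
    (Ω : Type) [MeasurableSpace Ω] (μ : Measure Ω) [IsProbabilityMeasure μ]
    (G : Fin T → Ω → Matrix (Fin m) (Fin n) ℝ)
    (hmeas : ∀ t a b, Measurable fun ω => G t ω a b)
    (hint : ∀ t a b, Integrable (fun ω => (G t ω * (G t ω)ᵀ) a b) μ)
    (Q : Matrix (Fin m) (Fin m) ℝ) (hQ : Q.PosDef)
    (hvar : ∀ t,
      (Q * Q - Matrix.of fun a b => ∫ ω, (G t ω * (G t ω)ᵀ) a b ∂μ).PosSemidef) :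
    ∫ ω, nuclearNorm (psdSqrt (∑ t, G t ω * (G t ω)ᵀ)) ∂μ ≤
      Real.sqrt T * nuclearNorm Q := by
  -- nuclearNorm of Q
  have hQdet : IsUnit Q.det := hQ.det_pos.ne'.isUnit
  have hQT : Qᵀ = Q := by
    rw [← Matrix.conjTranspose_eq_transpose_of_trivial, hQ.1.eq]
  have hnnQ : nuclearNorm Q = Q.trace := by
    rw [nuclearNorm, hQT, psdSqrt_eq' hQ.posSemidef rfl]
  -- positive semidefiniteness of the sum
  have hterm : ∀ (t : Fin T) (ω : Ω), (G t ω * (G t ω)ᵀ).PosSemidef := by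
    intro t ω
    have := Matrix.posSemidef_self_mul_conjTranspose (G t ω)
    rwa [Matrix.conjTranspose_eq_transpose_of_trivial] at this
  have hSpsd : ∀ ω : Ω, (∑ t, G t ω * (G t ω)ᵀ).PosSemidef := fun ω =>
    posSemidef_sum' _ _ fun t _ => hterm t ω
  rcases Nat.eq_zero_or_pos T with hT | hT
  · subst hT
    have h0 : psdSqrt (0 : Matrix (Fin m) (Fin m) ℝ) = 0 :=
      psdSqrt_eq' Matrix.PosSemidef.zero (by simp)
    have hnn0 : nuclearNorm (0 : Matrix (Fin m) (Fin m) ℝ) = 0 := by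
      rw [nuclearNorm]
      simp [h0]
    simp [h0, hnn0]
  -- main case
  set c := Real.sqrt T with hcdef
  have hc : 0 < c := Real.sqrt_pos.2 (by exact_mod_cast hT)
  have hcc : c * c = (T : ℝ) := Real.mul_self_sqrt (Nat.cast_nonneg T)
  set M := c • Q with hMdef
  have hMpd : M.PosDef := by
    refine ⟨?_, fun x hx => ?_⟩
    · show (c • Q)ᴴ = c • Q
      rw [Matrix.conjTranspose_smul, hQ.1.eq]
      congr 1
    · exact (hQ.smul hc).2 hx
  have hMinv : M⁻¹ = c⁻¹ • Q⁻¹ := by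
    apply Matrix.inv_eq_left_inv
    rw [hMdef, Matrix.smul_mul, Matrix.mul_smul, smul_smul, inv_mul_cancel₀ hc.ne',
      Matrix.nonsing_inv_mul Q hQdet, one_smul]
  have htrM : M.trace = c * Q.trace := by rw [hMdef, Matrix.trace_smul, smul_eq_mul]
  -- expected matrices
  set ES : Matrix (Fin m) (Fin m) ℝ :=
    ∑ t, Matrix.of fun a b => ∫ ω, (G t ω * (G t ω)ᵀ) a b ∂μ with hESdef
  have hSint : ∀ a b, Integrable (fun ω => (∑ t, G t ω * (G t ω)ᵀ) a b) μ := by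
    intro a b
    have : (fun ω => (∑ t, G t ω * (G t ω)ᵀ) a b)
        = fun ω => ∑ t, (G t ω * (G t ω)ᵀ) a b := by
      funext ω; simp [Matrix.sum_apply]
    rw [this]
    exact integrable_finset_sum _ fun t _ => hint t a b
  have hES : ∀ a b, ∫ ω, (∑ t, G t ω * (G t ω)ᵀ) a b ∂μ = ES a b := by
    intro a b
    have h1 : (fun ω => (∑ t, G t ω * (G t ω)ᵀ) a b)
        = fun ω => ∑ t, (G t ω * (G t ω)ᵀ) a b := by
      funext ω; simp [Matrix.sum_apply]
    rw [h1, integral_finset_sum _ fun t _ => hint t a b, hESdef]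
    simp [Matrix.sum_apply]
  -- the dominating function
  set g : Ω → ℝ := fun ω =>
    ((∑ a, ∑ b, M⁻¹ a b * (∑ t, G t ω * (G t ω)ᵀ) b a) + M.trace) / 2 with hgdef
  have hgint : Integrable g μ := by
    apply Integrable.div_const
    apply Integrable.add _ (integrable_const _)
    exact integrable_finset_sum _ fun a _ =>
      integrable_finset_sum _ fun b _ => (hSint b a).const_mul _
  have hpt : ∀ ω, nuclearNorm (psdSqrt (∑ t, G t ω * (G t ω)ᵀ)) ≤ g ω := by
    intro ω
    rw [nuclearNorm_psdSqrt' (hSpsd ω), hgdef]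
    have := trace_sqrt_le' (hSpsd ω) hMpd
    rwa [trace_mul_eq'] at this
  -- integral of g
  have hgval : ∫ ω, g ω ∂μ = ((M⁻¹ * ES).trace + M.trace) / 2 := by
    rw [hgdef]
    rw [integral_div]
    rw [integral_add (f := fun ω => ∑ a, ∑ b, M⁻¹ a b * (∑ t, G t ω * (G t ω)ᵀ) b a)
      (integrable_finset_sum _ fun a _ =>
      integrable_finset_sum _ fun b _ => (hSint b a).const_mul _) (integrable_const _)]
    rw [integral_const, probReal_univ]
    simp only [ENNReal.toReal_one, one_smul]
    congr 1
    rw [integral_finset_sum (f := fun a ω => ∑ b, M⁻¹ a b * (∑ t, G t ω * (G t ω)ᵀ) b a) _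
      fun a _ => integrable_finset_sum _ fun b _ => (hSint b a).const_mul _]
    rw [trace_mul_eq']
    congr 1
    refine Finset.sum_congr rfl fun a _ => ?_
    rw [integral_finset_sum (f := fun b ω => M⁻¹ a b * (∑ t, G t ω * (G t ω)ᵀ) b a) _
      fun b _ => (hSint b a).const_mul _]
    refine Finset.sum_congr rfl fun b _ => ?_
    rw [integral_const_mul, hES b a]
  -- bound on (M⁻¹ * ES).trace
  have hDpsd : ((T : ℝ) • (Q * Q) - ES).PosSemidef := by
    have hrw : (T : ℝ) • (Q * Q) - ES
        = ∑ t : Fin T, (Q * Q - Matrix.of fun a b => ∫ ω, (G t ω * (G t ω)ᵀ) a b ∂μ) := by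
      rw [Finset.sum_sub_distrib, Finset.sum_const, Finset.card_univ, Fintype.card_fin,
        hESdef, Nat.cast_smul_eq_nsmul]
    rw [hrw]
    exact posSemidef_sum' _ _ fun t _ => hvar t
  have hbound : (M⁻¹ * ES).trace ≤ c * Q.trace := by
    have h0 := trace_mul_nonneg' hMpd.inv.posSemidef hDpsd
    rw [Matrix.mul_sub, Matrix.trace_sub] at h0
    have hval : (M⁻¹ * ((T : ℝ) • (Q * Q))).trace = c * Q.trace := by
      rw [hMinv, Matrix.smul_mul, Matrix.mul_smul, smul_smul]
      rw [show Q⁻¹ * (Q * Q) = Q by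
        rw [← mul_assoc, Matrix.nonsing_inv_mul Q hQdet, one_mul]]
      rw [Matrix.trace_smul, smul_eq_mul]
      have : c⁻¹ * (T : ℝ) = c := by
        rw [← hcc]; field_simp
      rw [this]
    linarith
  -- conclude
  by_cases hf : Integrable (fun ω => nuclearNorm (psdSqrt (∑ t, G t ω * (G t ω)ᵀ))) μ
  · calc ∫ ω, nuclearNorm (psdSqrt (∑ t, G t ω * (G t ω)ᵀ)) ∂μ
        ≤ ∫ ω, g ω ∂μ := integral_mono hf hgint hpt
      _ = ((M⁻¹ * ES).trace + M.trace) / 2 := hgval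
      _ ≤ (c * Q.trace + c * Q.trace) / 2 := by rw [htrM]; linarith
      _ = Real.sqrt T * nuclearNorm Q := by rw [hnnQ, hcdef]; ring
  · rw [integral_undef hf]
    rw [hnnQ]
    exact mul_nonneg (Real.sqrt_nonneg _) (trace_nonneg_of_psd hQ.posSemidef)
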